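/- Let V and Q be finite-dimensional real inner product spaces, a : V × V → ℝ bilinear and coercive with constant κ > 0, b : V × Q → ℝ bilinear satisfying the inf-sup condition with constant α > 0, and f : V → ℝ linear. Then there exists a (unique) solution (u,p) ∈ V × Q of the saddle point system a(u,v) − b(v,p) = f(v) for all v ∈ V and b(u,q) = 0 for all q ∈ Q. -/

import Mathlib

set_option maxHeartbeats 1000000


/-- Existence for the abstract saddle point system: in finite dimensions,
coercivity of `a` and the inf-sup condition on `b` imply existence of a
solution of the saddle point system. -/
theorem saddle_point_existence
    {V Q : Type*}
    [NormedAddCommGroup V] [InnerProductSpace ℝ V] [FiniteDimensional ℝ V]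
    [NormedAddCommGroup Q] [InnerProductSpace ℝ Q] [FiniteDimensional ℝ Q]
    (a : V →ₗ[ℝ] V →ₗ[ℝ] ℝ) (b : V →ₗ[ℝ] Q →ₗ[ℝ] ℝ)
    (κ : ℝ) (hκ : 0 < κ) (hcoer : ∀ v : V, κ * ‖v‖ ^ 2 ≤ a v v)
    (α : ℝ) (hα : 0 < α)
    (hinfsup : ∀ q : Q, α * ‖q‖ ≤ ⨆ v : {v : V // v ≠ 0}, b v q / ‖(v : V)‖)
    (f : V →ₗ[ℝ] ℝ) :
    ∃ (u : V) (p : Q), (∀ v : V, a u v - b v p = f v) ∧ (∀ q : Q, b u q = 0) := by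
  -- the linear map encoding the saddle point system
  set M : V × Q →ₗ[ℝ] Module.Dual ℝ V × Module.Dual ℝ Q :=
    (a.comp (LinearMap.fst ℝ V Q) - (b.flip).comp (LinearMap.snd ℝ V Q)).prod
      (b.comp (LinearMap.fst ℝ V Q)) with hM
  -- M is injective
  have hinj : Function.Injective M := by
    rw [← LinearMap.ker_eq_bot, Submodule.eq_bot_iff]
    rintro ⟨u, p⟩ hup
    simp only [LinearMap.mem_ker, hM, LinearMap.prod_apply, Function.prod, Prod.mk_eq_zero,
      LinearMap.sub_apply, LinearMap.comp_apply, LinearMap.fst_apply, LinearMap.snd_apply,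
      sub_eq_zero] at hup
    obtain ⟨h1, h2⟩ := hup
    have h1' : ∀ v : V, a u v = b v p := fun v => congrFun (congrArg _ h1) v
    have h2' : ∀ q : Q, b u q = 0 := fun q => congrFun (congrArg _ h2) q
    have hu : u = 0 := by
      have : κ * ‖u‖ ^ 2 ≤ 0 := by
        calc κ * ‖u‖ ^ 2 ≤ a u u := hcoer u
        _ = b u p := h1' u
        _ = 0 := h2' p
      have hnn : 0 ≤ κ * ‖u‖ ^ 2 := by positivity
      have : ‖u‖ ^ 2 = 0 := by nlinarith
      simpa using this
    have hbp : ∀ v : V, b v p = 0 := by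
      intro v
      rw [← h1' v, hu]
      simp
    have hp : p = 0 := by
      have hsup : (⨆ v : {v : V // v ≠ 0}, b v p / ‖(v : V)‖) = 0 := by
        rcases isEmpty_or_nonempty {v : V // v ≠ 0} with h | h
        · exact Real.iSup_of_isEmpty _
        · simp [hbp]
      have := hinfsup p
      rw [hsup] at this
      have : ‖p‖ ≤ 0 := nonpos_of_mul_nonpos_right (by linarith) hα |>.trans (le_refl _)
      simpa using le_antisymm this (norm_nonneg p)
    simp [hu, hp]
  -- surjectivity from dimension count
  have hdim : Module.finrank ℝ (Module.Dual ℝ V × Module.Dual ℝ Q)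
      = Module.finrank ℝ (V × Q) := by
    simp [Module.finrank_prod, Subspace.dual_finrank_eq]
  have hsurj : Function.Surjective M := by
    have hker : Module.finrank ℝ (LinearMap.ker M) = 0 := by
      rw [LinearMap.ker_eq_bot.mpr hinj]; simp
    have hrange := LinearMap.finrank_range_add_finrank_ker M
    rw [hker, add_zero] at hrange
    have : LinearMap.range M = ⊤ :=
      Submodule.eq_top_of_finrank_eq (by rw [hrange, hdim])
    exact LinearMap.range_eq_top.mp this
  obtain ⟨⟨u, p⟩, hup⟩ := hsurj (f, 0)
  refine ⟨u, p, ?_, ?_⟩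
  · intro v
    have h1 : (a u - b.flip p : Module.Dual ℝ V) = f := congrArg Prod.fst hup
    have := congrFun (congrArg (fun g : Module.Dual ℝ V => (g : V → ℝ)) h1) v
    simpa using this
  · intro q
    have h2 : (b u : Module.Dual ℝ Q) = 0 := congrArg Prod.snd hup
    exact congrFun (congrArg (fun g : Module.Dual ℝ Q => (g : Q → ℝ)) h2) q
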